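/- Let H be self-adjoint on ℋ and let V be a symmetric operator with dom H ⊆ dom V such that V(H-i)^{-n} is trace class for some n ∈ ℕ. Let E_H be the spectral measure of H and P_k = E_H((-k,k)). Then P_k V P_k is trace class for every k ∈ ℕ. -/

import Mathlib

open Complex MeasureTheory Finset

variable {ℋ : Type*} [NormedAddCommGroup ℋ] [InnerProductSpace ℂ ℋ] [CompleteSpace ℋ]

/-- A bounded operator `T` is trace class iff the sums `Σᵢ |⟨fᵢ, T eᵢ⟩|` over all finite
orthonormal systems `(eᵢ)`, `(fᵢ)` are uniformly bounded. -/
def IsTraceClass (T : ℋ →L[ℂ] ℋ) : Prop :=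
  ∃ C : ℝ, ∀ (m : ℕ) (e g : Fin m → ℋ), Orthonormal ℂ e → Orthonormal ℂ g →
    ∑ i, ‖(inner ℂ (g i) (T (e i)) : ℂ)‖ ≤ C

lemma aux_inner_isometry (U : ℋ →L[ℂ] ℋ) (h : star U * U = 1) (x y : ℋ) :
    (inner ℂ (U x) (U y) : ℂ) = inner ℂ x y := by
  have h2 : ContinuousLinearMap.adjoint U (U x) = x := by
    rw [← ContinuousLinearMap.star_eq_adjoint]
    calc (star U) (U x) = (star U * U) x := rfl
      _ = x := by rw [h]; rfl
  calc (inner ℂ (U x) (U y) : ℂ)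
      = inner ℂ (ContinuousLinearMap.adjoint U (U x)) y :=
        (ContinuousLinearMap.adjoint_inner_left U y (U x)).symm
    _ = inner ℂ x y := by rw [h2]

lemma aux_orthonormal_isometry {m : ℕ} (U : ℋ →L[ℂ] ℋ) (h : star U * U = 1)
    {e : Fin m → ℋ} (he : Orthonormal ℂ e) : Orthonormal ℂ (fun i => U (e i)) := by
  rw [orthonormal_iff_ite] at he ⊢
  intro i j
  rw [aux_inner_isometry U h]
  exact he i j

lemma aux_sa_decomp (X : ℋ →L[ℂ] ℋ) (hX : IsSelfAdjoint X) (hX1 : ‖X‖ ≤ 1) :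
    ∃ U₁ U₂ : ℋ →L[ℂ] ℋ, star U₁ * U₁ = 1 ∧ star U₂ * U₂ = 1 ∧
      X = ((1:ℂ)/2) • (U₁ + U₂) := by
  set B := cfc (fun t : ℝ => Real.sqrt (1 - t^2)) X with hBdef
  have hB : IsSelfAdjoint B := cfc_predicate _ _
  have hspec : ∀ t ∈ spectrum ℝ X, 0 ≤ 1 - t^2 := by
    intro t ht
    have h1 := spectrum.norm_le_norm_mul_of_mem ht
    have h2 : ‖(1 : ℋ →L[ℂ] ℋ)‖ ≤ 1 := ContinuousLinearMap.norm_id_le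
    rw [Real.norm_eq_abs] at h1
    have h3 : ‖X‖ * ‖(1 : ℋ →L[ℂ] ℋ)‖ ≤ 1 :=
      mul_le_one₀ hX1 (norm_nonneg _) h2
    have h4 : |t| ≤ 1 := h1.trans h3
    nlinarith [abs_nonneg t, _root_.sq_abs t]
  have hBB : X * X + B * B = 1 := by
    have e1 : B * B = cfc (fun t : ℝ => 1 - t^2) X := by
      rw [hBdef, ← cfc_mul _ _ X]
      exact cfc_congr fun t ht => Real.mul_self_sqrt (hspec t ht)
    have e2 : X * X = cfc (fun t : ℝ => t * t) X := by
      rw [cfc_mul _ _ X, cfc_id' ℝ X]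
    rw [e1, e2, ← cfc_add X _ _]
    calc cfc (fun t : ℝ => t * t + (1 - t^2)) X = cfc (fun _ : ℝ => (1:ℝ)) X :=
          cfc_congr (by intro t _; ring)
      _ = 1 := cfc_one ℝ X
  have hcomm : X * B = B * X := by
    calc X * B = cfc (fun t : ℝ => t) X * cfc (fun t : ℝ => Real.sqrt (1 - t^2)) X := by
          rw [cfc_id' ℝ X]
      _ = cfc (fun t : ℝ => t * Real.sqrt (1 - t^2)) X := (cfc_mul _ _ X).symm
      _ = cfc (fun t : ℝ => Real.sqrt (1 - t^2) * t) X := cfc_congr (fun t _ => mul_comm _ _)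
      _ = B * X := by rw [cfc_mul _ _ X, cfc_id' ℝ X]
  have hstar1 : star (X + Complex.I • B) = X - Complex.I • B := by
    rw [star_add, star_smul, hX.star_eq, hB.star_eq]
    simp [Complex.conj_I, sub_eq_add_neg]
  have hstar2 : star (X - Complex.I • B) = X + Complex.I • B := by
    rw [star_sub, star_smul, hX.star_eq, hB.star_eq]
    simp [Complex.conj_I, sub_eq_add_neg]
  have h12 : (X - Complex.I • B) * (X + Complex.I • B) = 1 := by
    have e : (X - Complex.I • B) * (X + Complex.I • B)
        = X * X + B * B + Complex.I • (X * B) - Complex.I • (B * X) := by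
      simp only [sub_mul, mul_sub, add_mul, mul_add, smul_add, smul_sub, smul_mul_assoc,
        mul_smul_comm, smul_smul, mul_neg, neg_mul, one_mul, mul_one, neg_neg,
        Complex.I_mul_I, neg_one_smul, neg_smul, one_smul]
      abel
    rw [e, hcomm, hBB]
    abel
  have h21 : (X + Complex.I • B) * (X - Complex.I • B) = 1 := by
    have e : (X + Complex.I • B) * (X - Complex.I • B)
        = X * X + B * B + Complex.I • (B * X) - Complex.I • (X * B) := by
      simp only [sub_mul, mul_sub, add_mul, mul_add, smul_add, smul_sub, smul_mul_assoc,
        mul_smul_comm, smul_smul, mul_neg, neg_mul, one_mul, mul_one, neg_neg,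
        Complex.I_mul_I, neg_one_smul, neg_smul, one_smul]
      abel
    rw [e, hcomm, hBB]
    abel
  refine ⟨X + Complex.I • B, X - Complex.I • B, ?_, ?_, ?_⟩
  · rw [hstar1]; exact h12
  · rw [hstar2]; exact h21
  · module

lemma aux_decomp (A : ℋ →L[ℂ] ℋ) :
    ∃ (c : Fin 4 → ℂ) (U : Fin 4 → ℋ →L[ℂ] ℋ),
      (∀ j, star (U j) * U j = 1) ∧ A = ∑ j, c j • U j := by
  by_cases hA : A = 0
  · exact ⟨0, fun _ => 1, fun j => by simp, by simp [hA]⟩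
  · set a : ℝ := ‖A‖ with ha_def
    have ha : 0 < a := norm_pos_iff.mpr hA
    have ha' : (a:ℂ) ≠ 0 := by
      simpa using ne_of_gt ha
    set X : ℋ →L[ℂ] ℋ := (((1/(2*a) : ℝ)) : ℂ) • (A + star A) with hXdef
    set Y : ℋ →L[ℂ] ℋ := ((-Complex.I) * ((1/(2*a) : ℝ) : ℂ)) • (A - star A) with hYdef
    have hcstar : star ((((1/(2*a) : ℝ)) : ℂ)) = (((1/(2*a) : ℝ)) : ℂ) :=
      Complex.conj_ofReal _
    have hcstar2 : star ((-Complex.I) * ((1/(2*a) : ℝ) : ℂ))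
        = Complex.I * ((1/(2*a) : ℝ) : ℂ) := by
      simp [Complex.conj_ofReal]
    have hXsa : IsSelfAdjoint X := by
      rw [IsSelfAdjoint, hXdef, star_smul, star_add, star_star, hcstar, add_comm]
    have hYsa : IsSelfAdjoint Y := by
      rw [IsSelfAdjoint, hYdef, star_smul, star_sub, star_star, hcstar2]
      module
    have hnorm_aux : ‖(((1/(2*a) : ℝ)) : ℂ)‖ = 1/(2*a) := by
      rw [Complex.norm_real, Real.norm_eq_abs, abs_of_pos (by positivity)]
    have hXn : ‖X‖ ≤ 1 := by
      rw [hXdef]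
      calc ‖(((1/(2*a) : ℝ)) : ℂ) • (A + star A)‖
          = (1/(2*a)) * ‖A + star A‖ := by rw [norm_smul, hnorm_aux]
        _ ≤ (1/(2*a)) * (‖A‖ + ‖star A‖) := by
            apply mul_le_mul_of_nonneg_left (norm_add_le _ _) (by positivity)
        _ = 1 := by rw [norm_star, ← ha_def]; field_simp; ring
    have hYn : ‖Y‖ ≤ 1 := by
      rw [hYdef]
      have : ‖(-Complex.I) * ((1/(2*a) : ℝ) : ℂ)‖ = 1/(2*a) := by
        rw [norm_mul, norm_neg, Complex.norm_I, one_mul, hnorm_aux]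
      calc ‖((-Complex.I) * ((1/(2*a) : ℝ) : ℂ)) • (A - star A)‖
          = (1/(2*a)) * ‖A - star A‖ := by rw [norm_smul, this]
        _ ≤ (1/(2*a)) * (‖A‖ + ‖star A‖) := by
            apply mul_le_mul_of_nonneg_left (norm_sub_le _ _) (by positivity)
        _ = 1 := by rw [norm_star, ← ha_def]; field_simp; ring
    obtain ⟨U₁, U₂, h1, h2, hXd⟩ := aux_sa_decomp X hXsa hXn
    obtain ⟨U₃, U₄, h3, h4, hYd⟩ := aux_sa_decomp Y hYsa hYn
    have e1 : (a:ℂ) • X = (1/2 : ℂ) • (A + star A) := by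
      rw [hXdef, smul_smul]
      congr 1
      push_cast
      field_simp
    have e2 : ((a:ℂ) * Complex.I) • Y = (1/2 : ℂ) • (A - star A) := by
      rw [hYdef, smul_smul]
      congr 1
      push_cast
      rw [show (a:ℂ) * Complex.I * (-Complex.I * (1/(2*(a:ℂ))))
          = (a:ℂ) * (1/(2*(a:ℂ))) * (-(Complex.I * Complex.I)) from by ring,
        Complex.I_mul_I]
      field_simp
    have hXY : (a:ℂ) • X + ((a:ℂ) * Complex.I) • Y = A := by
      rw [e1, e2]; module
    refine ⟨![(a:ℂ)/2, (a:ℂ)/2, (a:ℂ)*Complex.I/2, (a:ℂ)*Complex.I/2], ![U₁, U₂, U₃, U₄],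
      ?_, ?_⟩
    · intro j; fin_cases j <;> simpa
    · rw [Fin.sum_univ_four]
      simp only [Matrix.cons_val_zero, Matrix.cons_val_one, Matrix.head_cons,
        Matrix.cons_val_two, Matrix.tail_cons, Matrix.cons_val_three]
      rw [← hXY, hXd, hYd]
      module

lemma aux_tc_conj (A B T : ℋ →L[ℂ] ℋ) (hT : IsTraceClass T) :
    IsTraceClass (A.comp (T.comp B)) := by
  obtain ⟨C, hC⟩ := hT
  obtain ⟨c, U, hU, hA⟩ := aux_decomp (ContinuousLinearMap.adjoint A)
  obtain ⟨d, W, hW, hB⟩ := aux_decomp B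
  have hC0 : 0 ≤ C := by
    have horth : Orthonormal ℂ (fun i : Fin 0 => (0:ℋ)) := by
      rw [orthonormal_iff_ite]; intro i; exact i.elim0
    simpa using hC 0 (fun _ => 0) (fun _ => 0) horth horth
  refine ⟨∑ j, ∑ l, ‖c j‖ * ‖d l‖ * C, ?_⟩
  intro m e g he hg
  have step : ∀ i, ‖(inner ℂ (g i) ((A.comp (T.comp B)) (e i)) : ℂ)‖
      ≤ ∑ j, ∑ l, ‖c j‖ * ‖d l‖ * ‖(inner ℂ (U j (g i)) (T (W l (e i))) : ℂ)‖ := by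
    intro i
    have e2 : (inner ℂ (g i) ((A.comp (T.comp B)) (e i)) : ℂ)
        = inner ℂ (ContinuousLinearMap.adjoint A (g i)) (T (B (e i))) :=
      (ContinuousLinearMap.adjoint_inner_left A (T (B (e i))) (g i)).symm
    have e3 : ContinuousLinearMap.adjoint A (g i) = ∑ j, c j • (U j (g i)) := by
      rw [hA]; simp
    have e4 : T (B (e i)) = ∑ l, d l • T (W l (e i)) := by
      rw [hB]; simp
    rw [e2, e3, e4, sum_inner]
    calc ‖∑ j, (inner ℂ (c j • U j (g i)) (∑ l, d l • T (W l (e i))) : ℂ)‖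
        ≤ ∑ j, ‖(inner ℂ (c j • U j (g i)) (∑ l, d l • T (W l (e i))) : ℂ)‖ :=
          norm_sum_le _ _
      _ ≤ ∑ j, ∑ l, ‖c j‖ * ‖d l‖ * ‖(inner ℂ (U j (g i)) (T (W l (e i))) : ℂ)‖ := by
          apply sum_le_sum; intro j _
          rw [inner_smul_left, inner_sum]
          calc ‖(starRingEnd ℂ) (c j) * ∑ l, (inner ℂ (U j (g i)) (d l • T (W l (e i))) : ℂ)‖
              = ‖c j‖ * ‖∑ l, (inner ℂ (U j (g i)) (d l • T (W l (e i))) : ℂ)‖ := by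
                rw [norm_mul, RCLike.norm_conj]
            _ ≤ ‖c j‖ * ∑ l, ‖(inner ℂ (U j (g i)) (d l • T (W l (e i))) : ℂ)‖ :=
                mul_le_mul_of_nonneg_left (norm_sum_le _ _) (norm_nonneg _)
            _ = ∑ l, ‖c j‖ * ‖(inner ℂ (U j (g i)) (d l • T (W l (e i))) : ℂ)‖ :=
                Finset.mul_sum _ _ _
            _ = ∑ l, ‖c j‖ * ‖d l‖ * ‖(inner ℂ (U j (g i)) (T (W l (e i))) : ℂ)‖ := by
                apply sum_congr rfl; intro l _
                rw [inner_smul_right, norm_mul]; ring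
  calc ∑ i, ‖(inner ℂ (g i) ((A.comp (T.comp B)) (e i)) : ℂ)‖
      ≤ ∑ i, ∑ j, ∑ l, ‖c j‖ * ‖d l‖ * ‖(inner ℂ (U j (g i)) (T (W l (e i))) : ℂ)‖ :=
        sum_le_sum (fun i _ => step i)
    _ = ∑ j, ∑ l, ∑ i, ‖c j‖ * ‖d l‖ * ‖(inner ℂ (U j (g i)) (T (W l (e i))) : ℂ)‖ := by
        rw [Finset.sum_comm]
        exact sum_congr rfl fun j _ => Finset.sum_comm
    _ ≤ ∑ j, ∑ l, ‖c j‖ * ‖d l‖ * C := by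
        apply sum_le_sum; intro j _; apply sum_le_sum; intro l _
        rw [← Finset.mul_sum]
        exact mul_le_mul_of_nonneg_left
          (hC m (fun i => W l (e i)) (fun i => U j (g i))
            (aux_orthonormal_isometry _ (hW l) he)
            (aux_orthonormal_isometry _ (hU j) hg))
          (by positivity)

/-- Let `H` be self-adjoint on `ℋ` with Borel functional calculus `Φ`
(so that `Φ((·-i)⁻¹) = (H-i)⁻¹ = R`), and let `V` be symmetric with `dom H ⊆ dom V` such that
`V(H-i)⁻ⁿ` is trace class for some `n ∈ ℕ`. With `P k = E_H((-k,k)) = Φ(𝟙_{(-k,k)})`,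
the operator `P k V P k` is (everywhere defined, bounded and) trace class for every `k`. -/
theorem PkVPk_traceClass
    (H V : ℋ →ₗ.[ℂ] ℋ) (hH : IsSelfAdjoint H)
    (hdom : H.domain ≤ V.domain)
    (hsymm : ∀ x y : V.domain, (inner ℂ (V x) (y : ℋ) : ℂ) = inner ℂ (x : ℋ) (V y))
    (R : ℋ →L[ℂ] ℋ) (hR1 : ∀ ψ : ℋ, R ψ ∈ H.domain)
    (hR2 : ∀ ψ : ℋ, H ⟨R ψ, hR1 ψ⟩ - I • R ψ = ψ)
    (hR3 : ∀ φ : H.domain, R (H φ - I • (φ : ℋ)) = (φ : ℋ))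
    -- the bounded Borel functional calculus of `H`
    (Φ : (ℝ → ℂ) → (ℋ →L[ℂ] ℋ))
    (hΦ1 : Φ (fun _ => 1) = 1)
    (hΦadd : ∀ g₁ g₂ : ℝ → ℂ, Measurable g₁ → Measurable g₂ →
      (∃ C, ∀ x, ‖g₁ x‖ ≤ C) → (∃ C, ∀ x, ‖g₂ x‖ ≤ C) → Φ (g₁ + g₂) = Φ g₁ + Φ g₂)
    (hΦmul : ∀ g₁ g₂ : ℝ → ℂ, Measurable g₁ → Measurable g₂ →
      (∃ C, ∀ x, ‖g₁ x‖ ≤ C) → (∃ C, ∀ x, ‖g₂ x‖ ≤ C) →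
      Φ (g₁ * g₂) = (Φ g₁).comp (Φ g₂))
    (hΦnorm : ∀ (g : ℝ → ℂ) (C : ℝ), (∀ x, ‖g x‖ ≤ C) → ∀ ψ : ℋ, ‖Φ g ψ‖ ≤ C * ‖ψ‖)
    (hΦstar : ∀ g : ℝ → ℂ, ∀ ψ χ : ℋ,
      (inner ℂ (Φ g ψ) χ : ℂ) = inner ℂ ψ (Φ (fun x => starRingEnd ℂ (g x)) χ))
    (hΦres : Φ (fun x : ℝ => (((x : ℂ)) - I)⁻¹) = R)
    -- `V(H-i)⁻ⁿ` is trace class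
    (n : ℕ) (hn : 1 ≤ n)
    (hRVdom : ∀ ψ : ℋ, (⇑R)^[n] ψ ∈ V.domain)
    (VRn : ℋ →L[ℂ] ℋ)
    (hVRn : ∀ ψ : ℋ, VRn ψ = V ⟨(⇑R)^[n] ψ, hRVdom ψ⟩)
    (hVRn_tc : IsTraceClass VRn)
    -- the spectral projections `P k = E_H((-k,k))`
    (P : ℕ → (ℋ →L[ℂ] ℋ))
    (hP : ∀ k : ℕ, P k = Φ (Set.indicator (Set.Ioo (-(k : ℝ)) (k : ℝ)) fun _ => 1)) :
    ∀ k : ℕ,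
      ∃ hmem : ∀ ψ : ℋ, P k ψ ∈ V.domain,
        ∃ T : ℋ →L[ℂ] ℋ,
          (∀ ψ : ℋ, T ψ = P k (V ⟨P k ψ, hmem ψ⟩)) ∧ IsTraceClass T := by
  intro k
  have hne : ∀ x : ℝ, ((x : ℂ) - I) ≠ 0 := by
    intro x h
    have := congrArg Complex.im h
    simp at this
  have hrmeas : Measurable (fun x : ℝ => ((x : ℂ) - I)⁻¹) :=
    ((Complex.continuous_ofReal.sub continuous_const).inv₀ hne).measurable
  have hrbd : ∀ x : ℝ, ‖((x : ℂ) - I)⁻¹‖ ≤ 1 := by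
    intro x
    have h1 : (1:ℝ) ≤ ‖(x : ℂ) - I‖ := by
      have h2 : |((x : ℂ) - I).im| ≤ ‖(x : ℂ) - I‖ := Complex.abs_im_le_norm _
      simpa using h2
    rw [norm_inv]
    exact inv_le_one_of_one_le₀ h1
  set gk : ℝ → ℂ :=
    Set.indicator (Set.Ioo (-(k : ℝ)) (k : ℝ)) (fun x => ((x : ℂ) - I)^n) with hgkdef
  have hgkmeas : Measurable gk :=
    ((Complex.continuous_ofReal.sub continuous_const).pow n).measurable.indicator
      measurableSet_Ioo
  have hgkbd : ∃ C, ∀ x, ‖gk x‖ ≤ C := by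
    refine ⟨((k:ℝ)+1)^n, fun x => ?_⟩
    rw [hgkdef]
    by_cases hx : x ∈ Set.Ioo (-(k : ℝ)) (k : ℝ)
    · rw [Set.indicator_of_mem hx, norm_pow]
      apply pow_le_pow_left₀ (norm_nonneg _)
      calc ‖(x : ℂ) - I‖ ≤ ‖(x : ℂ)‖ + ‖I‖ := norm_sub_le _ _
        _ = |x| + 1 := by rw [Complex.norm_real, Real.norm_eq_abs, Complex.norm_I]
        _ ≤ (k:ℝ) + 1 := by
            have := abs_lt.mpr ⟨hx.1, hx.2⟩
            linarith [le_of_lt this]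
    · rw [Set.indicator_of_notMem hx]
      simp only [norm_zero]
      positivity
  have key : ∀ (m : ℕ) (h : ℝ → ℂ), Measurable h → (∃ C, ∀ x, ‖h x‖ ≤ C) →
      ∀ ψ : ℋ, Φ (fun x => ((x : ℂ) - I)⁻¹ ^ m * h x) ψ = (⇑R)^[m] (Φ h ψ) := by
    intro m
    induction m with
    | zero =>
        intro h _ _ ψ
        have : (fun x : ℝ => ((x : ℂ) - I)⁻¹ ^ 0 * h x) = h := by
          funext x; simp
        rw [this]
        simp
    | succ m ih =>
        intro h hm hb ψ
        obtain ⟨C, hCb⟩ := hb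
        have hbm : ∀ x : ℝ, ‖((x : ℂ) - I)⁻¹ ^ m * h x‖ ≤ C := by
          intro x
          rw [norm_mul, norm_pow]
          have h1 : ‖((x : ℂ) - I)⁻¹‖ ^ m ≤ 1 := pow_le_one₀ (norm_nonneg _) (hrbd x)
          have h2 := mul_le_mul h1 (hCb x) (norm_nonneg _) zero_le_one
          simpa using h2
        have hsplit : (fun x : ℝ => ((x : ℂ) - I)⁻¹ ^ (m+1) * h x)
            = (fun x : ℝ => ((x : ℂ) - I)⁻¹) * (fun x : ℝ => ((x : ℂ) - I)⁻¹ ^ m * h x) := by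
          funext x
          show ((x : ℂ) - I)⁻¹ ^ (m+1) * h x = ((x : ℂ) - I)⁻¹ * (((x : ℂ) - I)⁻¹ ^ m * h x)
          ring
        rw [hsplit, hΦmul _ (fun x : ℝ => ((x : ℂ) - I)⁻¹ ^ m * h x) hrmeas ((hrmeas.pow_const m).mul hm) ⟨1, hrbd⟩ ⟨C, hbm⟩,
          hΦres, ContinuousLinearMap.comp_apply, ih h hm ⟨C, hCb⟩ ψ,
          ← Function.iterate_succ_apply' R]
  have hfg : Set.indicator (Set.Ioo (-(k : ℝ)) (k : ℝ)) (fun _ => (1:ℂ))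
      = fun x : ℝ => ((x : ℂ) - I)⁻¹ ^ n * gk x := by
    funext x
    rw [hgkdef]
    by_cases hx : x ∈ Set.Ioo (-(k : ℝ)) (k : ℝ)
    · rw [Set.indicator_of_mem hx, Set.indicator_of_mem hx, ← mul_pow,
        inv_mul_cancel₀ (hne x), one_pow]
    · rw [Set.indicator_of_notMem hx, Set.indicator_of_notMem hx, mul_zero]
  have hPk : ∀ ψ : ℋ, P k ψ = (⇑R)^[n] (Φ gk ψ) := by
    intro ψ
    rw [hP k, hfg]
    exact key n gk hgkmeas hgkbd ψ
  have hmem : ∀ ψ : ℋ, P k ψ ∈ V.domain := by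
    intro ψ
    rw [hPk ψ]
    exact hRVdom _
  refine ⟨hmem, (P k).comp (VRn.comp (Φ gk)), fun ψ => ?_, aux_tc_conj _ _ _ hVRn_tc⟩
  show P k (VRn (Φ gk ψ)) = P k (V ⟨P k ψ, hmem ψ⟩)
  rw [hVRn]
  exact congrArg (P k) (congrArg V (Subtype.ext (hPk ψ).symm))
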